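/- Let A be a d×d real symmetric positive semidefinite matrix, let s ∈ {1,…,d}, let ε ∈ (0,1/3), and let N be a finite subset of S₀^{d−1}(s) such that for every v ∈ S₀^{d−1}(s) there exists u ∈ N with ‖v − u‖₂ ≤ ε and ‖v − u‖₀ ≤ s. Then max_{u∈N} uᵀAu ≤ φ_max(s;A) ≤ (1 − 3ε)^{−1}·max_{u∈N} uᵀAu. -/

import Mathlib

open Real

/-- Number of nonzero coordinates (ℓ₀ "norm"). -/
noncomputable def l0norm {d : ℕ} (v : Fin d → ℝ) : ℕ := {j | v j ≠ 0}.ncard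

/-- Euclidean (ℓ₂) norm. -/
noncomputable def l2norm {d : ℕ} (v : Fin d → ℝ) : ℝ := Real.sqrt (∑ j, (v j) ^ 2)

/-- Quadratic form vᵀ A v. -/
noncomputable def quadForm {d : ℕ} (A : Matrix (Fin d) (Fin d) ℝ) (v : Fin d → ℝ) : ℝ :=
  dotProduct v (A.mulVec v)

/-- Minimum sparse eigenvalue φ_min(s; A). -/
noncomputable def phiMin {d : ℕ} (s : ℕ) (A : Matrix (Fin d) (Fin d) ℝ) : ℝ :=
  sInf ((fun v => quadForm A v / (l2norm v) ^ 2) '' {v : Fin d → ℝ | v ≠ 0 ∧ l0norm v ≤ s})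

/-- Maximum sparse eigenvalue φ_max(s; A). -/
noncomputable def phiMax {d : ℕ} (s : ℕ) (A : Matrix (Fin d) (Fin d) ℝ) : ℝ :=
  sSup ((fun v => quadForm A v / (l2norm v) ^ 2) '' {v : Fin d → ℝ | v ≠ 0 ∧ l0norm v ≤ s})

/-- The sparse unit sphere S₀^{d-1}(s). -/
def sparseSphere (d s : ℕ) : Set (Fin d → ℝ) := {v | l2norm v = 1 ∧ l0norm v ≤ s}


lemma l2norm_sq {d : ℕ} (v : Fin d → ℝ) : l2norm v ^ 2 = ∑ j, v j ^ 2 :=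
  Real.sq_sqrt (Finset.sum_nonneg fun _ _ => sq_nonneg _)

lemma l2norm_nonneg {d : ℕ} (v : Fin d → ℝ) : 0 ≤ l2norm v := Real.sqrt_nonneg _

lemma l2norm_pos {d : ℕ} {v : Fin d → ℝ} (hv : v ≠ 0) : 0 < l2norm v := by
  obtain ⟨j, hj⟩ := Function.ne_iff.mp hv
  refine Real.sqrt_pos.mpr (Finset.sum_pos' (fun _ _ => sq_nonneg _) ⟨j, Finset.mem_univ j, ?_⟩)
  have : v j ≠ 0 := hj
  positivity

lemma l2norm_smul {d : ℕ} (c : ℝ) (v : Fin d → ℝ) : l2norm (c • v) = |c| * l2norm v := by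
  simp only [l2norm, Pi.smul_apply, smul_eq_mul, mul_pow, ← Finset.mul_sum,
    Real.sqrt_mul (sq_nonneg c), Real.sqrt_sq_eq_abs]

lemma abs_apply_le_l2norm {d : ℕ} (v : Fin d → ℝ) (j : Fin d) : |v j| ≤ l2norm v := by
  rw [← Real.sqrt_sq_eq_abs]
  exact Real.sqrt_le_sqrt (Finset.single_le_sum (f := fun j => v j ^ 2)
    (fun _ _ => sq_nonneg _) (Finset.mem_univ j))

lemma l0norm_smul {d : ℕ} {c : ℝ} (hc : c ≠ 0) (v : Fin d → ℝ) : l0norm (c • v) = l0norm v := by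
  unfold l0norm
  congr 1
  ext j
  simp [hc]

lemma quadForm_nonneg {d : ℕ} {A : Matrix (Fin d) (Fin d) ℝ} (hA : A.PosSemidef)
    (v : Fin d → ℝ) : 0 ≤ quadForm A v := by
  simpa [quadForm] using hA.dotProduct_mulVec_nonneg v

lemma quadForm_smul {d : ℕ} (A : Matrix (Fin d) (Fin d) ℝ) (c : ℝ) (v : Fin d → ℝ) :
    quadForm A (c • v) = c ^ 2 * quadForm A v := by
  unfold quadForm
  rw [Matrix.mulVec_smul, dotProduct_smul, smul_dotProduct]
  simp [smul_eq_mul]; ring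

lemma cross_symm {d : ℕ} {A : Matrix (Fin d) (Fin d) ℝ} (hA : A.IsHermitian)
    (u w : Fin d → ℝ) : dotProduct w (A.mulVec u) = dotProduct u (A.mulVec w) := by
  simp only [dotProduct, Matrix.mulVec, Finset.mul_sum]
  rw [Finset.sum_comm]
  refine Finset.sum_congr rfl fun i _ => Finset.sum_congr rfl fun j _ => ?_
  have := hA.apply i j
  simp only [star_trivial] at this
  rw [← this]; ring

lemma quadForm_expand {d : ℕ} {A : Matrix (Fin d) (Fin d) ℝ} (hA : A.IsHermitian)
    (u w : Fin d → ℝ) :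
    quadForm A (u + w) = quadForm A u + 2 * dotProduct u (A.mulVec w) + quadForm A w := by
  unfold quadForm
  rw [Matrix.mulVec_add, add_dotProduct, dotProduct_add, dotProduct_add,
    cross_symm hA u w]
  ring

lemma quadForm_cs {d : ℕ} {A : Matrix (Fin d) (Fin d) ℝ} (hA : A.PosSemidef)
    (u w : Fin d → ℝ) :
    (dotProduct u (A.mulVec w)) ^ 2 ≤ quadForm A u * quadForm A w := by
  set b := dotProduct u (A.mulVec w)
  have key : ∀ t : ℝ, 0 ≤ quadForm A w * (t * t) + (2 * b) * t + quadForm A u := by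
    intro t
    have h := quadForm_nonneg hA (u + t • w)
    rw [quadForm_expand hA.1, quadForm_smul] at h
    have hb : dotProduct u (A.mulVec (t • w)) = t * b := by
      rw [Matrix.mulVec_smul, dotProduct_smul, smul_eq_mul]
    rw [hb] at h
    nlinarith [h]
  have := discrim_le_zero key
  unfold discrim at this
  nlinarith [this]

/-- maximum sparse eigenvalue is controlled by its values on a greedy ε-net. -/
theorem max_sparse_eigen_on_net {d : ℕ} (s : ℕ) (hs1 : 1 ≤ s) (hsd : s ≤ d)
    (A : Matrix (Fin d) (Fin d) ℝ) (hA : A.PosSemidef)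
    (ε : ℝ) (hε0 : 0 < ε) (hε1 : ε < 1/3)
    (N : Finset (Fin d → ℝ)) (hNsub : ↑N ⊆ sparseSphere d s)
    (hnet : ∀ v ∈ sparseSphere d s, ∃ u ∈ N, l2norm (v - u) ≤ ε ∧ l0norm (v - u) ≤ s) :
    sSup ((fun u => quadForm A u) '' ↑N) ≤ phiMax s A ∧
      phiMax s A ≤ (1 - 3 * ε)⁻¹ * sSup ((fun u => quadForm A u) '' ↑N) := by
  have hd : 0 < d := lt_of_lt_of_le hs1 hsd
  set S : Set ℝ := (fun v => quadForm A v / (l2norm v) ^ 2) ''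
    {v : Fin d → ℝ | v ≠ 0 ∧ l0norm v ≤ s} with hS
  set P : ℝ := phiMax s A with hP
  set M : ℝ := sSup ((fun u => quadForm A u) '' ↑N) with hM
  -- the distinguished unit vector e₀
  set i0 : Fin d := ⟨0, hd⟩
  set e : Fin d → ℝ := Pi.single i0 1 with he
  have he2 : l2norm e = 1 := by
    have : ∑ j, (e j) ^ 2 = 1 := by
      rw [Finset.sum_eq_single i0]
      · simp [he, Pi.single_apply]
      · intro j _ hj; simp [he, Pi.single_apply, hj]
      · intro h; exact absurd (Finset.mem_univ i0) h
    simp [l2norm, this]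
  have he0 : l0norm e ≤ s := by
    have : {j | e j ≠ 0} ⊆ {i0} := by
      intro j hj
      by_contra hji
      have hji' : j ≠ i0 := by simpa using hji
      exact hj (by simp [he, Pi.single_apply, hji'])
    calc l0norm e ≤ ({i0} : Set (Fin d)).ncard :=
          Set.ncard_le_ncard this (Set.finite_singleton i0)
      _ = 1 := Set.ncard_singleton i0
      _ ≤ s := hs1
  have hene : e ≠ 0 := by
    intro h
    rw [h] at he2
    simp [l2norm] at he2
  have heS : e ∈ sparseSphere d s := ⟨he2, he0⟩
  -- S is nonempty and bounded above
  have hSne : S.Nonempty := ⟨_, ⟨e, ⟨hene, he0⟩, rfl⟩⟩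
  have hSbdd : BddAbove S := by
    refine ⟨∑ i, ∑ j, |A i j|, fun x hx => ?_⟩
    obtain ⟨v, ⟨hv0, _⟩, rfl⟩ := hx
    have hl : 0 < l2norm v := l2norm_pos hv0
    rw [div_le_iff₀ (by positivity)]
    have hexp : quadForm A v = ∑ i, ∑ j, v i * (A i j * v j) := by
      simp [quadForm, dotProduct, Matrix.mulVec, Finset.mul_sum]
    rw [hexp, l2norm_sq, ← l2norm_sq, Finset.sum_mul]
    refine Finset.sum_le_sum fun i _ => ?_
    rw [Finset.sum_mul]
    refine Finset.sum_le_sum fun j _ => ?_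
    calc v i * (A i j * v j) ≤ |v i * (A i j * v j)| := le_abs_self _
      _ = |A i j| * (|v i| * |v j|) := by rw [abs_mul, abs_mul]; ring
      _ ≤ |A i j| * (l2norm v * l2norm v) := by
          exact mul_le_mul_of_nonneg_left
            (mul_le_mul (abs_apply_le_l2norm v i) (abs_apply_le_l2norm v j)
              (abs_nonneg _) (l2norm_nonneg v)) (abs_nonneg _)
      _ = |A i j| * l2norm v ^ 2 := by ring
  -- value on the sphere is ≤ P
  have sphere_le_P : ∀ v ∈ sparseSphere d s, quadForm A v ≤ P := by
    intro v hv
    have hv0 : v ≠ 0 := by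
      intro h
      rw [h] at hv
      simp [sparseSphere, l2norm] at hv
    have : quadForm A v / (l2norm v) ^ 2 ≤ P := le_csSup hSbdd ⟨v, ⟨hv0, hv.2⟩, rfl⟩
    rwa [hv.1, one_pow, div_one] at this
  have hPnn : 0 ≤ P := le_trans (quadForm_nonneg hA e) (sphere_le_P e heS)
  -- quadratic form bound for sparse vectors
  have sparse_bound : ∀ w : Fin d → ℝ, l0norm w ≤ s → quadForm A w ≤ P * (l2norm w) ^ 2 := by
    intro w hw
    by_cases hw0 : w = 0
    · subst hw0
      simp [quadForm, Matrix.mulVec_zero, dotProduct_zero, l2norm]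
    · have hl : 0 < l2norm w := l2norm_pos hw0
      have : quadForm A w / (l2norm w) ^ 2 ≤ P := le_csSup hSbdd ⟨w, ⟨hw0, hw⟩, rfl⟩
      calc quadForm A w = quadForm A w / (l2norm w) ^ 2 * (l2norm w) ^ 2 := by
            field_simp
        _ ≤ P * (l2norm w) ^ 2 := mul_le_mul_of_nonneg_right this (sq_nonneg _)
  -- N nonempty, T bounded
  obtain ⟨u0, hu0, -⟩ := hnet e heS
  have hTne : ((fun u => quadForm A u) '' ↑N).Nonempty := ⟨_, ⟨u0, hu0, rfl⟩⟩
  have hTbdd : BddAbove ((fun u => quadForm A u) '' ↑N) :=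
    (N.finite_toSet.image _).bddAbove
  have huM : ∀ u ∈ N, quadForm A u ≤ M := fun u hu => le_csSup hTbdd ⟨u, hu, rfl⟩
  -- part 1
  have part1 : M ≤ P := by
    refine csSup_le hTne ?_
    rintro x ⟨u, hu, rfl⟩
    exact sphere_le_P u (hNsub hu)
  refine ⟨part1, ?_⟩
  -- key estimate on the sphere
  have key : ∀ v ∈ sparseSphere d s, quadForm A v ≤ M + 3 * ε * P := by
    intro v hv
    obtain ⟨u, huN, hvu2, hvu0⟩ := hnet v hv
    set w : Fin d → ℝ := v - u with hw
    have hvw : v = u + w := by rw [hw]; ring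
    have hqw : quadForm A w ≤ P * ε ^ 2 := by
      calc quadForm A w ≤ P * (l2norm w) ^ 2 := sparse_bound w hvu0
        _ ≤ P * ε ^ 2 :=
            mul_le_mul_of_nonneg_left (pow_le_pow_left₀ (l2norm_nonneg w) hvu2 2) hPnn
    have hqu : quadForm A u ≤ M := huM u huN
    have hquP : quadForm A u ≤ P := sphere_le_P u (hNsub huN)
    have hqunn : 0 ≤ quadForm A u := quadForm_nonneg hA u
    have hqwnn : 0 ≤ quadForm A w := quadForm_nonneg hA w
    have hcs := quadForm_cs hA u w
    have hcross : dotProduct u (A.mulVec w) ≤ P * ε := by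
      have h1 : (dotProduct u (A.mulVec w)) ^ 2 ≤ (P * ε) ^ 2 := by nlinarith
      have h2 := Real.sqrt_le_sqrt h1
      rw [Real.sqrt_sq_eq_abs, Real.sqrt_sq (by positivity)] at h2
      exact (le_abs_self _).trans h2
    have hexp := quadForm_expand hA.1 u w
    rw [hvw, hexp]
    nlinarith [hqw, hqu, hcross, hPnn, hε0.le, hε1.le]
  -- conclude part 2
  have hPle : P ≤ M + 3 * ε * P := by
    rw [hP, phiMax]
    refine csSup_le hSne ?_
    rintro x ⟨v, ⟨hv0, hvs⟩, rfl⟩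
    have hl : 0 < l2norm v := l2norm_pos hv0
    set c : ℝ := (l2norm v)⁻¹ with hc
    have hcpos : 0 < c := inv_pos.mpr hl
    have hsph : c • v ∈ sparseSphere d s := by
      constructor
      · rw [l2norm_smul, abs_of_pos hcpos, hc, inv_mul_cancel₀ hl.ne']
      · rw [l0norm_smul hcpos.ne' v]; exact hvs
    have := key (c • v) hsph
    rw [quadForm_smul] at this
    have hc2 : c ^ 2 = ((l2norm v) ^ 2)⁻¹ := by rw [hc, inv_pow]
    rw [hc2] at this
    calc quadForm A v / (l2norm v) ^ 2 = ((l2norm v) ^ 2)⁻¹ * quadForm A v := by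
          rw [div_eq_mul_inv, mul_comm]
      _ ≤ M + 3 * ε * P := this
  have h3 : (0:ℝ) < 1 - 3 * ε := by linarith
  rw [← div_eq_inv_mul, le_div_iff₀ h3]
  nlinarith [hPle]
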